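/- arXiv:2102.02399 — 2 statements merged into one kernel-verified Lean document; each statement's English description precedes it below -/
import Mathlib

section
/- Let u : [0, t₀) → ℝ be differentiable, u(0) = 1, and suppose u satisfies the differential inequality (d/dt) u(t)^p ≤ K u(t) with u > 0, where p = (n+2)/(n-2) and K = sup|R₀| · a for constants a = (n-2)/(4(n-1)), n ≥ 3. Then u(t) ≤ (1 + ((n-2)/((n-1)(n+2))) · sup|R₀| · t)^{(n-2)/4} for all t ∈ [0, t₀). -/
/-- Upper barrier for the Yamabe flow conformal factor: if `u(0)=1`, `u>0` and
`d/dt(u^p) ≤ a·K·u` with `p=(n+2)/(n-2)`, `a=(n-2)/(4(n-1))`, then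
`u(t) ≤ (1 + ((n-2)/((n-1)(n+2))) K t)^{(n-2)/4}`. -/
theorem stmt_5 (n : ℕ) (hn : 3 ≤ n) (K t₀ : ℝ) (hK : 0 ≤ K) (ht₀ : 0 < t₀)
    (u D : ℝ → ℝ)
    (hpos : ∀ t ∈ Set.Ico (0:ℝ) t₀, 0 < u t)
    (hu0 : u 0 = 1)
    (hderiv : ∀ t ∈ Set.Ico (0:ℝ) t₀,
      HasDerivAt (fun s => u s ^ (((n:ℝ) + 2) / ((n:ℝ) - 2))) (D t) t)
    (hineq : ∀ t ∈ Set.Ico (0:ℝ) t₀,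
      D t ≤ (((n:ℝ) - 2) / (4 * ((n:ℝ) - 1))) * K * u t) :
    ∀ t ∈ Set.Ico (0:ℝ) t₀,
      u t ≤ (1 + (((n:ℝ) - 2) / (((n:ℝ) - 1) * ((n:ℝ) + 2))) * K * t) ^ (((n:ℝ) - 2) / 4) := by
  set N : ℝ := (n : ℝ) with hNdef
  have hN : (3 : ℝ) ≤ N := by rw [hNdef]; exact_mod_cast hn
  have h2 : (0 : ℝ) < N - 2 := by linarith
  have h1 : (0 : ℝ) < N - 1 := by linarith
  have hn2 : (0 : ℝ) < N + 2 := by linarith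
  set p : ℝ := (N + 2) / (N - 2) with hpdef
  set q : ℝ := 4 / (N + 2) with hqdef
  set c : ℝ := (N - 2) / ((N - 1) * (N + 2)) with hcdef
  have hq0 : 0 < q := by positivity
  have hpq : p * q = 4 / (N - 2) := by
    rw [hpdef, hqdef]; field_simp
  have hpq1 : p * (q - 1) = -1 := by
    rw [hpdef, hqdef]; field_simp; ring
  set z : ℝ → ℝ := fun s => (u s ^ p) ^ q with hzdef
  set g : ℝ → ℝ := fun s => z s - c * K * s with hgdef
  -- derivative of g on the interval
  have hg : ∀ t ∈ Set.Ico (0:ℝ) t₀,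
      HasDerivAt g (D t * q * (u t ^ p) ^ (q - 1) - c * K) t := by
    intro t ht
    have hbase : u t ^ p ≠ 0 := by
      have := hpos t ht; positivity
    have h1' : HasDerivAt z (D t * q * (u t ^ p) ^ (q - 1)) t :=
      (hderiv t ht).rpow_const (Or.inl hbase)
    have h2' := h1'.sub ((hasDerivAt_id t).const_mul (c * K))
    simp only [mul_one] at h2'
    exact h2'
  have hg_nonpos : ∀ t ∈ Set.Ico (0:ℝ) t₀,
      D t * q * (u t ^ p) ^ (q - 1) - c * K ≤ 0 := by
    intro t ht
    have hu := hpos t ht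
    have hrw : (u t ^ p) ^ (q - 1) = (u t)⁻¹ := by
      rw [← Real.rpow_mul hu.le, hpq1, Real.rpow_neg_one]
    rw [hrw]
    have hmul : D t * (q * (u t)⁻¹)
        ≤ ((N - 2) / (4 * (N - 1)) * K * u t) * (q * (u t)⁻¹) :=
      mul_le_mul_of_nonneg_right (hineq t ht) (by positivity)
    have heq : ((N - 2) / (4 * (N - 1)) * K * u t) * (q * (u t)⁻¹) = c * K := by
      rw [hqdef, hcdef]
      field_simp
    nlinarith [hmul, heq]
  -- g is antitone on the interval
  have hanti : AntitoneOn g (Set.Ico 0 t₀) := by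
    apply antitoneOn_of_deriv_nonpos (convex_Ico _ _)
    · intro x hx
      exact (hg x hx).continuousAt.continuousWithinAt
    · rw [interior_Ico]
      intro x hx
      exact (hg x (Set.Ioo_subset_Ico_self hx)).differentiableAt.differentiableWithinAt
    · rw [interior_Ico]
      intro x hx
      have hx' := Set.Ioo_subset_Ico_self hx
      rw [(hg x hx').deriv]
      exact hg_nonpos x hx'
  intro t ht
  have h0mem : (0:ℝ) ∈ Set.Ico (0:ℝ) t₀ := ⟨le_refl 0, ht₀⟩
  have hg0 : g 0 = 1 := by
    simp [hgdef, hzdef, hu0]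
  have hgt : g t ≤ g 0 := hanti h0mem ht ht.1
  have hzle : z t ≤ 1 + c * K * t := by
    have : z t - c * K * t ≤ 1 := by rw [← hg0]; exact hgt
    linarith
  have hzt : z t = u t ^ ((4:ℝ)/(N-2)) := by
    rw [hzdef]
    simp only
    rw [← Real.rpow_mul (hpos t ht).le, hpq]
  have hexp : (4:ℝ)/(N-2) * ((N-2)/4) = 1 := by field_simp
  have hut : u t = z t ^ ((N-2)/4) := by
    rw [hzt, ← Real.rpow_mul (hpos t ht).le, hexp, Real.rpow_one]
  rw [show ((n:ℝ) - 2) = N - 2 from rfl]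
  rw [hut]
  have hz0 : 0 ≤ z t := by
    have := (hpos t ht).le
    rw [hzt]; positivity
  exact Real.rpow_le_rpow hz0 hzle (by positivity)
end

section
/- Let u : [0, t₀) → (0,∞) be differentiable with u(0) = 1 and suppose (d/dt) u(t)^p ≥ -a K u(t) where p = (n+2)/(n-2), a = (n-2)/(4(n-1)), K ≥ 0, n ≥ 3. Then u(t) ≥ (1 - ((n-2)/((n-1)(n+2))) K t)^{(n-2)/4} for all t ∈ [0, t₀) with ((n-2)/((n-1)(n+2))) K t < 1. -/
/-- Lower barrier for the Yamabe flow conformal factor: if `u(0)=1`, `u>0` and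
`d/dt(u^p) ≥ -a·K·u`, then `u(t) ≥ (1 - ((n-2)/((n-1)(n+2))) K t)^{(n-2)/4}`
as long as the base is positive. -/
theorem stmt_6 (n : ℕ) (hn : 3 ≤ n) (K t₀ : ℝ) (hK : 0 ≤ K) (ht₀ : 0 < t₀)
    (u D : ℝ → ℝ)
    (hpos : ∀ t ∈ Set.Ico (0:ℝ) t₀, 0 < u t)
    (hu0 : u 0 = 1)
    (hderiv : ∀ t ∈ Set.Ico (0:ℝ) t₀,
      HasDerivAt (fun s => u s ^ (((n:ℝ) + 2) / ((n:ℝ) - 2))) (D t) t)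
    (hineq : ∀ t ∈ Set.Ico (0:ℝ) t₀,
      -((((n:ℝ) - 2) / (4 * ((n:ℝ) - 1))) * K * u t) ≤ D t) :
    ∀ t ∈ Set.Ico (0:ℝ) t₀,
      (((n:ℝ) - 2) / (((n:ℝ) - 1) * ((n:ℝ) + 2))) * K * t < 1 →
      (1 - (((n:ℝ) - 2) / (((n:ℝ) - 1) * ((n:ℝ) + 2))) * K * t) ^ (((n:ℝ) - 2) / 4) ≤ u t := by
  intro t ht hlt
  obtain ⟨ht0, htt0⟩ := ht
  have hn3 : (3:ℝ) ≤ (n:ℝ) := by exact_mod_cast hn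
  have h2 : (0:ℝ) < (n:ℝ) - 2 := by linarith
  have h1 : (0:ℝ) < (n:ℝ) - 1 := by linarith
  have hnp2 : (0:ℝ) < (n:ℝ) + 2 := by linarith
  set p : ℝ := ((n:ℝ)+2)/((n:ℝ)-2) with hp
  set c : ℝ := ((n:ℝ)-2)/(((n:ℝ)-1)*((n:ℝ)+2)) with hc
  set r : ℝ := 4/((n:ℝ)+2) with hr
  have hr0 : 0 < r := by positivity
  -- the auxiliary function
  set g : ℝ → ℝ := fun s => (u s ^ p) ^ r + c * K * s with hg
  have hsub : Set.Icc (0:ℝ) t ⊆ Set.Ico (0:ℝ) t₀ := fun x hx =>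
    ⟨hx.1, lt_of_le_of_lt hx.2 htt0⟩
  -- derivative of g at points of Ico 0 t₀
  have hgderiv : ∀ x ∈ Set.Ico (0:ℝ) t₀,
      HasDerivAt g (D x * r * (u x ^ p) ^ (r - 1) + c * K) x := by
    intro x hx
    have hux : 0 < u x := hpos x hx
    have h1' : HasDerivAt (fun s => (u s ^ p) ^ r) (D x * r * (u x ^ p) ^ (r - 1)) x :=
      (hderiv x hx).rpow_const (Or.inl (ne_of_gt (Real.rpow_pos_of_pos hux p)))
    have h2' := h1'.add ((hasDerivAt_id x).const_mul (c * K))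
    simp only [mul_one] at h2'
    exact h2'
  -- the derivative is nonnegative
  have hgnonneg : ∀ x ∈ Set.Ico (0:ℝ) t₀, 0 ≤ D x * r * (u x ^ p) ^ (r - 1) + c * K := by
    intro x hx
    have hux : 0 < u x := hpos x hx
    have hpow : 0 < (u x ^ p) ^ (r - 1) := Real.rpow_pos_of_pos (Real.rpow_pos_of_pos hux p) _
    have hDx := hineq x hx
    have key : -(c * K) ≤ D x * r * (u x ^ p) ^ (r - 1) := by
      have h3 : (-((((n:ℝ) - 2) / (4 * ((n:ℝ) - 1))) * K * u x)) * r * (u x ^ p) ^ (r - 1)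
          ≤ D x * r * (u x ^ p) ^ (r - 1) := by
        apply mul_le_mul_of_nonneg_right _ hpow.le
        exact mul_le_mul_of_nonneg_right hDx hr0.le
      refine le_trans (le_of_eq ?_) h3
      have hup : (u x ^ p) ^ (r - 1) = u x ^ (p * (r - 1)) := by
        rw [← Real.rpow_mul hux.le]
      rw [hup]
      have hexp : p * (r - 1) = -1 := by
        rw [hp, hr]; field_simp; ring
      rw [hexp, Real.rpow_neg_one]
      have hac : (((n:ℝ) - 2) / (4 * ((n:ℝ) - 1))) * r = c := by
        rw [hr, hc]; field_simp
      have huinv : u x * (u x)⁻¹ = 1 := mul_inv_cancel₀ hux.ne'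
      calc -(c * K) = -((((n:ℝ) - 2) / (4 * ((n:ℝ) - 1))) * r * K) * (u x * (u x)⁻¹) := by
              rw [huinv, hac]; ring
        _ = -((((n:ℝ) - 2) / (4 * ((n:ℝ) - 1))) * K * u x) * r * (u x)⁻¹ := by ring
    linarith
  -- monotonicity of g on [0, t]
  have hmono : MonotoneOn g (Set.Icc (0:ℝ) t) := by
    apply monotoneOn_of_deriv_nonneg (convex_Icc _ _)
    · intro x hx
      exact ((hgderiv x (hsub hx)).continuousAt).continuousWithinAt
    · intro x hx
      have hx' : x ∈ Set.Icc (0:ℝ) t := interior_subset hx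
      exact ((hgderiv x (hsub hx')).differentiableAt).differentiableWithinAt
    · intro x hx
      have hx' : x ∈ Set.Ico (0:ℝ) t₀ := hsub (interior_subset hx)
      rw [(hgderiv x hx').deriv]
      exact hgnonneg x hx'
  have hg0 : g 0 = 1 := by
    simp [hg, hu0, Real.one_rpow]
  have hgt : 1 ≤ g t := by
    rw [← hg0]
    exact hmono (Set.left_mem_Icc.mpr ht0) (Set.mem_Icc.mpr ⟨ht0, le_refl t⟩) ht0
  -- extract the bound
  have hut : 0 < u t := hpos t ⟨ht0, htt0⟩
  have hbound : 1 - c * K * t ≤ u t ^ (p * r) := by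
    have : (u t ^ p) ^ r = u t ^ (p * r) := by rw [← Real.rpow_mul hut.le]
    have hgt' : 1 - c * K * t ≤ (u t ^ p) ^ r := by
      have := hgt; simp only [hg] at this; linarith
    linarith [hgt'.trans_eq this]
  have hbase : 0 ≤ 1 - c * K * t := by linarith
  have hfinal : (1 - c * K * t) ^ (((n:ℝ) - 2) / 4)
      ≤ (u t ^ (p * r)) ^ (((n:ℝ) - 2) / 4) := by
    apply Real.rpow_le_rpow hbase hbound (by positivity)
  have hone : (u t ^ (p * r)) ^ (((n:ℝ) - 2) / 4) = u t := by
    rw [← Real.rpow_mul hut.le]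
    have : p * r * (((n:ℝ) - 2) / 4) = 1 := by
      rw [hp, hr]; field_simp
    rw [this, Real.rpow_one]
  rw [hone] at hfinal
  exact hfinal
end
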